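/- Let m, n be positive integers with 3 | mn and let k be a natural number. If a tromino tiling of the m×n rectangle R(m,n) has the property that every interior horizontal grid line and every interior vertical grid line is crossed by at least k tiles, then 3·k·(m + n − 2) ≤ 2·m·n. -/
import Mathlib


/-- The m×n rectangle: cells {0,…,m−1}×{0,…,n−1}. -/
def rect (m n : ℕ) : Finset (ℕ × ℕ) := Finset.range m ×ˢ Finset.range n

/-- The 2×2 block with top-left corner (i,j). -/
def block (i j : ℕ) : Finset (ℕ × ℕ) :=
  {(i, j), (i, j + 1), (i + 1, j), (i + 1, j + 1)}

/-- An L-tromino: a 2×2 block minus one of its cells. -/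
def IsLTromino (T : Finset (ℕ × ℕ)) : Prop :=
  ∃ i j c, c ∈ block i j ∧ T = block i j \ {c}

/-- A tromino tiling of R(m,n): a partition of the rectangle into L-trominoes. -/
def IsTrominoTiling (m n : ℕ) (𝒯 : Finset (Finset (ℕ × ℕ))) : Prop :=
  (∀ T ∈ 𝒯, IsLTromino T) ∧
  (∀ T₁ ∈ 𝒯, ∀ T₂ ∈ 𝒯, T₁ ≠ T₂ → Disjoint T₁ T₂) ∧
  𝒯.sup id = rect m n

/-- Tile T crosses the i-th horizontal grid line. -/
def CrossesH (T : Finset (ℕ × ℕ)) (i : ℕ) : Prop :=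
  (∃ c ∈ T, c.1 < i) ∧ (∃ c ∈ T, i ≤ c.1)

/-- Tile T crosses the j-th vertical grid line. -/
def CrossesV (T : Finset (ℕ × ℕ)) (j : ℕ) : Prop :=
  (∃ c ∈ T, c.2 < j) ∧ (∃ c ∈ T, j ≤ c.2)

/-- A tiling of R(m,n) is faultfree if every interior horizontal and vertical
grid line is crossed by some tile. -/
def IsFaultfree (m n : ℕ) (𝒯 : Finset (Finset (ℕ × ℕ))) : Prop :=
  (∀ i, 0 < i → i < m → ∃ T ∈ 𝒯, CrossesH T i) ∧
  (∀ j, 0 < j → j < n → ∃ T ∈ 𝒯, CrossesV T j)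

open Classical in
/-- The number of tiles of 𝒯 crossing the i-th horizontal grid line. -/
noncomputable def crossCountH (𝒯 : Finset (Finset (ℕ × ℕ))) (i : ℕ) : ℕ :=
  (𝒯.filter fun T => CrossesH T i).card

open Classical in
/-- The number of tiles of 𝒯 crossing the j-th vertical grid line. -/
noncomputable def crossCountV (𝒯 : Finset (Finset (ℕ × ℕ))) (j : ℕ) : ℕ :=
  (𝒯.filter fun T => CrossesV T j).card


lemma tromino_card' {T : Finset (ℕ × ℕ)} (h : IsLTromino T) : T.card = 3 := by
  obtain ⟨i, j, c, hc, rfl⟩ := h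
  rw [Finset.card_sdiff_of_subset (by simpa using hc)]
  have : (block i j).card = 4 := by
    simp [block, Prod.ext_iff]
  simp [this]

lemma tromino_rows {T : Finset (ℕ × ℕ)} (h : IsLTromino T) :
    ∃ r, ∀ i, CrossesH T i ↔ i = r + 1 := by
  obtain ⟨a, b, c, hc, rfl⟩ := h
  refine ⟨a, fun i => ?_⟩
  constructor
  · rintro ⟨⟨p, hp, hp1⟩, ⟨q, hq, hq1⟩⟩
    simp [block, Finset.mem_sdiff] at hp hq
    rcases hp with ⟨hp | hp | hp | hp, -⟩ <;> rcases hq with ⟨hq | hq | hq | hq, -⟩ <;>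
      subst hp <;> subst hq <;> simp_all <;> omega
  · rintro rfl
    simp [block, Finset.mem_insert] at hc
    constructor
    · rcases hc with hc | hc | hc | hc
      · exact ⟨(a, b+1), by simp [block, Finset.mem_sdiff, hc, Prod.ext_iff], by simp⟩
      · exact ⟨(a, b), by simp [block, Finset.mem_sdiff, hc, Prod.ext_iff], by simp⟩
      · exact ⟨(a, b), by simp [block, Finset.mem_sdiff, hc, Prod.ext_iff], by simp⟩
      · exact ⟨(a, b), by simp [block, Finset.mem_sdiff, hc, Prod.ext_iff], by simp⟩
    · rcases hc with hc | hc | hc | hc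
      · exact ⟨(a+1, b), by simp [block, Finset.mem_sdiff, hc, Prod.ext_iff], by simp⟩
      · exact ⟨(a+1, b), by simp [block, Finset.mem_sdiff, hc, Prod.ext_iff], by simp⟩
      · exact ⟨(a+1, b+1), by simp [block, Finset.mem_sdiff, hc, Prod.ext_iff], by simp⟩
      · exact ⟨(a+1, b), by simp [block, Finset.mem_sdiff, hc, Prod.ext_iff], by simp⟩

lemma tromino_cols {T : Finset (ℕ × ℕ)} (h : IsLTromino T) :
    ∃ r, ∀ j, CrossesV T j ↔ j = r + 1 := by
  obtain ⟨a, b, c, hc, rfl⟩ := h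
  refine ⟨b, fun j => ?_⟩
  constructor
  · rintro ⟨⟨p, hp, hp1⟩, ⟨q, hq, hq1⟩⟩
    simp [block, Finset.mem_sdiff] at hp hq
    rcases hp with ⟨hp | hp | hp | hp, -⟩ <;> rcases hq with ⟨hq | hq | hq | hq, -⟩ <;>
      subst hp <;> subst hq <;> simp_all <;> omega
  · rintro rfl
    simp [block, Finset.mem_insert] at hc
    constructor
    · rcases hc with hc | hc | hc | hc
      · exact ⟨(a+1, b), by simp [block, Finset.mem_sdiff, hc, Prod.ext_iff], by simp⟩
      · exact ⟨(a, b), by simp [block, Finset.mem_sdiff, hc, Prod.ext_iff], by simp⟩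
      · exact ⟨(a, b), by simp [block, Finset.mem_sdiff, hc, Prod.ext_iff], by simp⟩
      · exact ⟨(a, b), by simp [block, Finset.mem_sdiff, hc, Prod.ext_iff], by simp⟩
    · rcases hc with hc | hc | hc | hc
      · exact ⟨(a, b+1), by simp [block, Finset.mem_sdiff, hc, Prod.ext_iff], by simp⟩
      · exact ⟨(a+1, b+1), by simp [block, Finset.mem_sdiff, hc, Prod.ext_iff], by simp⟩
      · exact ⟨(a, b+1), by simp [block, Finset.mem_sdiff, hc, Prod.ext_iff], by simp⟩
      · exact ⟨(a, b+1), by simp [block, Finset.mem_sdiff, hc, Prod.ext_iff], by simp⟩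

open Classical in
lemma sum_crossH_le (𝒯 : Finset (Finset (ℕ × ℕ)))
    (hL : ∀ T ∈ 𝒯, IsLTromino T) (s : Finset ℕ) :
    ∑ i ∈ s, crossCountH 𝒯 i ≤ 𝒯.card := by
  have hdisj : ∀ i ∈ s, ∀ i' ∈ s, i ≠ i' →
      Disjoint (𝒯.filter fun T => CrossesH T i) (𝒯.filter fun T => CrossesH T i') := by
    intro i _ i' _ hne
    rw [Finset.disjoint_left]
    intro T hT hT'
    simp only [Finset.mem_filter] at hT hT'
    obtain ⟨r, hr⟩ := tromino_rows (hL T hT.1)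
    exact hne ((hr i).1 hT.2 ▸ ((hr i').1 hT'.2).symm ▸ rfl)
  calc ∑ i ∈ s, crossCountH 𝒯 i
      = (s.biUnion fun i => 𝒯.filter fun T => CrossesH T i).card := by
        rw [Finset.card_biUnion hdisj]; rfl
    _ ≤ 𝒯.card := Finset.card_le_card (by
        intro T hT
        simp only [Finset.mem_biUnion, Finset.mem_filter] at hT
        obtain ⟨i, _, h, _⟩ := hT
        exact h)

open Classical in
lemma sum_crossV_le (𝒯 : Finset (Finset (ℕ × ℕ)))
    (hL : ∀ T ∈ 𝒯, IsLTromino T) (s : Finset ℕ) :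
    ∑ j ∈ s, crossCountV 𝒯 j ≤ 𝒯.card := by
  have hdisj : ∀ i ∈ s, ∀ i' ∈ s, i ≠ i' →
      Disjoint (𝒯.filter fun T => CrossesV T i) (𝒯.filter fun T => CrossesV T i') := by
    intro i _ i' _ hne
    rw [Finset.disjoint_left]
    intro T hT hT'
    simp only [Finset.mem_filter] at hT hT'
    obtain ⟨r, hr⟩ := tromino_cols (hL T hT.1)
    exact hne ((hr i).1 hT.2 ▸ ((hr i').1 hT'.2).symm ▸ rfl)
  calc ∑ j ∈ s, crossCountV 𝒯 j
      = (s.biUnion fun j => 𝒯.filter fun T => CrossesV T j).card := by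
        rw [Finset.card_biUnion hdisj]; rfl
    _ ≤ 𝒯.card := Finset.card_le_card (by
        intro T hT
        simp only [Finset.mem_biUnion, Finset.mem_filter] at hT
        obtain ⟨i, _, h, _⟩ := hT
        exact h)

/-- If every interior grid line of a tromino tiling of R(m,n) is
crossed by at least k tiles, then 3·k·(m + n − 2) ≤ 2·m·n. -/
theorem crossing_number_inequality (m n k : ℕ) (hm : 0 < m) (hn : 0 < n)
    (h3 : 3 ∣ m * n) (𝒯 : Finset (Finset (ℕ × ℕ)))
    (hT : IsTrominoTiling m n 𝒯)
    (hH : ∀ i, 0 < i → i < m → k ≤ crossCountH 𝒯 i)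
    (hV : ∀ j, 0 < j → j < n → k ≤ crossCountV 𝒯 j) :
    3 * k * (m + n - 2) ≤ 2 * m * n := by
  classical
  obtain ⟨hL, hdisj, hcover⟩ := hT
  -- 3 * |𝒯| = m * n
  have hcard : 3 * 𝒯.card = m * n := by
    have h1 : 𝒯.sup id = 𝒯.biUnion id := Finset.sup_eq_biUnion 𝒯 id
    have h2 : (𝒯.biUnion id).card = ∑ T ∈ 𝒯, T.card :=
      Finset.card_biUnion (fun T h1 T' h2 hne => hdisj T h1 T' h2 hne)
    have h3 : ∑ T ∈ 𝒯, T.card = 3 * 𝒯.card := by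
      rw [Finset.sum_congr rfl fun T hT => tromino_card' (hL T hT)]
      simp [Finset.sum_const, mul_comm]
    have h4 : (rect m n).card = m * n := by simp [rect]
    rw [← h4, ← hcover, h1, h2, h3]
  -- bounds from crossings
  have hkm : k * (m - 1) ≤ 𝒯.card := by
    calc k * (m - 1) = ∑ _i ∈ Finset.Ioo 0 m, k := by
          rw [Finset.sum_const, Nat.card_Ioo, smul_eq_mul, mul_comm, Nat.sub_zero]
      _ ≤ ∑ i ∈ Finset.Ioo 0 m, crossCountH 𝒯 i := by
          refine Finset.sum_le_sum fun i hi => ?_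
          rw [Finset.mem_Ioo] at hi
          exact hH i hi.1 hi.2
      _ ≤ 𝒯.card := sum_crossH_le 𝒯 hL _
  have hkn : k * (n - 1) ≤ 𝒯.card := by
    calc k * (n - 1) = ∑ _j ∈ Finset.Ioo 0 n, k := by
          rw [Finset.sum_const, Nat.card_Ioo, smul_eq_mul, mul_comm, Nat.sub_zero]
      _ ≤ ∑ j ∈ Finset.Ioo 0 n, crossCountV 𝒯 j := by
          refine Finset.sum_le_sum fun j hj => ?_
          rw [Finset.mem_Ioo] at hj
          exact hV j hj.1 hj.2
      _ ≤ 𝒯.card := sum_crossV_le 𝒯 hL _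
  calc 3 * k * (m + n - 2) = 3 * (k * (m - 1) + k * (n - 1)) := by
        rw [show m + n - 2 = (m - 1) + (n - 1) from by omega]; ring
    _ ≤ 3 * (𝒯.card + 𝒯.card) := Nat.mul_le_mul_left 3 (Nat.add_le_add hkm hkn)
    _ = 2 * (3 * 𝒯.card) := by ring
    _ = 2 * m * n := by rw [hcard]; ring
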